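/- arXiv:math/0608144 — 2 statements merged into one kernel-verified Lean document; each statement's English description precedes it below -/
import Mathlib

section
/- (Toen's formula.) For all objects X, Y, L of C the following equality of rational numbers holds: |Hom(L,Y)_{X[1]}| · {L,Y} / ( |Aut(Y)| · {Y,Y} ) = |Hom(X,L)_Y| · {X,L} / ( |Aut(X)| · {X,X} ). -/
open CategoryTheory CategoryTheory.Limits CategoryTheory.Pretriangulated

universe v u

/-- `{X,Y} := ∏_{i>0} |Hom(X[i],Y)|^{(-1)^i}`, as a rational number. -/
noncomputable def homAlternatingProd {C : Type u} [CategoryTheory.Category.{v} C]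
    [HasShift C ℤ] (X Y : C) : ℚ :=
  ∏' i : ℕ, ((Nat.card (X⟦(i : ℤ) + 1⟧ ⟶ Y) : ℚ) ^ ((-1 : ℤ) ^ (i + 1)))

/-- `Cone(u) ≅ W`: there are morphisms completing `u` to a distinguished triangle with
third vertex `W`. -/
def ConeIs {C : Type u} [CategoryTheory.Category.{v} C] [Preadditive C] [HasZeroObject C]
    [HasShift C ℤ] [∀ i : ℤ, (CategoryTheory.shiftFunctor C i).Additive] [Pretriangulated C]
    {A B : C} (u : A ⟶ B) (W : C) : Prop :=
  ∃ (v : B ⟶ W) (w : W ⟶ A⟦(1 : ℤ)⟧), Triangle.mk u v w ∈ distTriang C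

set_option linter.unusedSectionVars false
set_option linter.unusedVariables false
set_option maxHeartbeats 1000000

attribute [local instance] Fintype.ofFinite

noncomputable section ToenAux

section GroupCount

variable {G H : Type*} [AddCommGroup G] [AddCommGroup H]

lemma card_eq_ker_mul_range (f : G →+ H) :
    Nat.card G = Nat.card f.ker * Nat.card f.range := by
  have e1 : G ≃ (G ⧸ f.ker) × f.ker := AddSubgroup.addGroupEquivQuotientProdAddSubgroup
  have e2 : (G ⧸ f.ker) ≃ f.range := (QuotientAddGroup.quotientKerEquivRange f).toEquiv
  rw [Nat.card_congr e1, Nat.card_prod, Nat.card_congr e2, mul_comm]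

lemma card_subgroup_eq_ker_mul_map (f : G →+ H) (K : AddSubgroup G) (hK : f.ker ≤ K) :
    Nat.card K = Nat.card f.ker * Nat.card (K.map f) := by
  have := card_eq_ker_mul_range (f.comp K.subtype)
  rw [this]
  congr 1
  · refine Nat.card_congr ⟨fun x => ⟨x.1.1, x.2⟩, fun x => ⟨⟨x.1, hK x.2⟩, x.2⟩, ?_, ?_⟩ <;>
      (intro x; rfl)
  · apply Nat.card_congr
    refine ⟨fun x => ⟨x.1, ?_⟩, fun x => ⟨x.1, ?_⟩, fun x => rfl, fun x => rfl⟩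
    · obtain ⟨⟨g, hg⟩, h⟩ := x.2
      exact ⟨g, hg, h⟩
    · obtain ⟨g, hg, h⟩ := x.2
      exact ⟨⟨g, hg⟩, h⟩

lemma card_subsingleton_one (α : Type*) [Subsingleton α] [Nonempty α] : Nat.card α = 1 :=
  Nat.card_eq_one_iff_unique.2 ⟨inferInstance, inferInstance⟩

end GroupCount

section Cat

variable {C : Type u} [Category.{v} C] [Preadditive C] [HasZeroObject C] [HasShift C ℤ]
  [∀ i : ℤ, (CategoryTheory.shiftFunctor C i).Additive] [Pretriangulated C]
  [∀ A B : C, Finite (A ⟶ B)]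

/-- postcomposition with `mor₃` -/
@[simps!] def tmap (T : Triangle C) (M : C) : (T.obj₁⟦(1:ℤ)⟧ ⟶ M) →+ (T.obj₃ ⟶ M) :=
  AddMonoidHom.mk' (fun φ => T.mor₃ ≫ φ) (fun a b => Preadditive.comp_add _ _ _ _ _ _)

/-- precomposition with `mor₁` -/
@[simps!] def smap (T : Triangle C) (M : C) : (M ⟶ T.obj₁) →+ (M ⟶ T.obj₂) :=
  AddMonoidHom.mk' (fun φ => φ ≫ T.mor₁) (fun a b => Preadditive.add_comp _ _ _ _ _ _)

noncomputable def rho (T : Triangle C) (M : C) : ℕ := Nat.card (tmap T M).range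
noncomputable def sig (T : Triangle C) (M : C) : ℕ := Nat.card (smap T M).range

lemma tmap_ker_eq {T : Triangle C} (hT : T ∈ distTriang C) (M : C) :
    (tmap T M).ker = (tmap T.rotate M).range := by
  ext φ
  constructor
  · intro hφ
    obtain ⟨g, hg⟩ := Triangle.yoneda_exact₂ _ (rot_of_distTriang _ (rot_of_distTriang _ hT)) φ hφ
    exact ⟨g, hg.symm⟩
  · rintro ⟨ψ, rfl⟩
    show T.rotate.mor₂ ≫ T.rotate.mor₃ ≫ ψ = 0
    rw [← Category.assoc]
    have : T.rotate.mor₂ ≫ T.rotate.mor₃ = 0 := comp_distTriang_mor_zero₂₃ _ (rot_of_distTriang _ hT)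
    rw [this, Limits.zero_comp]

lemma smap_ker_eq {T : Triangle C} (hT : T ∈ distTriang C) (M : C) :
    (smap T M).ker = (smap T.invRotate M).range := by
  ext φ
  constructor
  · intro hφ
    obtain ⟨g, hg⟩ := Triangle.coyoneda_exact₂ _ (inv_rot_of_distTriang _ hT) φ hφ
    exact ⟨g, hg.symm⟩
  · rintro ⟨ψ, rfl⟩
    show (ψ ≫ T.invRotate.mor₁) ≫ T.invRotate.mor₂ = 0
    rw [Category.assoc]
    have : T.invRotate.mor₁ ≫ T.invRotate.mor₂ = 0 :=
      comp_distTriang_mor_zero₁₂ _ (inv_rot_of_distTriang _ hT)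
    rw [this, Limits.comp_zero]

lemma rho_mul {T : Triangle C} (hT : T ∈ distTriang C) (M : C) :
    Nat.card (T.obj₁⟦(1:ℤ)⟧ ⟶ M) = rho T.rotate M * rho T M := by
  have := card_eq_ker_mul_range (tmap T M)
  rwa [tmap_ker_eq hT] at this

lemma sig_mul {T : Triangle C} (hT : T ∈ distTriang C) (M : C) :
    Nat.card (M ⟶ T.obj₁) = sig T.invRotate M * sig T M := by
  have := card_eq_ker_mul_range (smap T M)
  rwa [smap_ker_eq hT] at this

lemma rho_pos (T : Triangle C) (M : C) : 0 < rho T M := Nat.card_pos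
lemma sig_pos (T : Triangle C) (M : C) : 0 < sig T M := Nat.card_pos

lemma rho_one_of_card_one {T : Triangle C} {M : C}
    (h : Nat.card (T.obj₁⟦(1:ℤ)⟧ ⟶ M) = 1) : rho T M = 1 := by
  have : Subsingleton (T.obj₁⟦(1:ℤ)⟧ ⟶ M) := Nat.card_eq_one_iff_unique.1 h |>.1
  have : Subsingleton (tmap T M).range := by
    constructor
    rintro ⟨a, x, rfl⟩ ⟨b, y, rfl⟩
    simp [Subsingleton.elim x y]
  exact card_subsingleton_one _

lemma sig_one_of_card_one {T : Triangle C} {M : C}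
    (h : Nat.card (M ⟶ T.obj₁) = 1) : sig T M = 1 := by
  have : Subsingleton (M ⟶ T.obj₁) := Nat.card_eq_one_iff_unique.1 h |>.1
  have : Subsingleton (smap T M).range := by
    constructor
    rintro ⟨a, x, rfl⟩ ⟨b, y, rfl⟩
    simp [Subsingleton.elim x y]
  exact card_subsingleton_one _

lemma rho_prod (M : C) : ∀ (n : ℕ) (T : Triangle C) (_ : T ∈ distTriang C)
    (_ : ∀ j, n ≤ j → Nat.card ((Triangle.rotate^[j] T).obj₁⟦(1:ℤ)⟧ ⟶ M) = 1),
    (rho T M : ℚ) =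
      ∏ j ∈ Finset.range n, (Nat.card ((Triangle.rotate^[j] T).obj₁⟦(1:ℤ)⟧ ⟶ M) : ℚ) ^ ((-1:ℤ)^j) := by
  intro n
  induction n with
  | zero =>
    intro T hT hvan
    simp only [Finset.range_zero, Finset.prod_empty, Nat.cast_eq_one]
    exact rho_one_of_card_one (by simpa using hvan 0 le_rfl)
  | succ n ih =>
    intro T hT hvan
    have IH := ih T.rotate (rot_of_distTriang _ hT) (fun j hj => by
      rw [← Function.iterate_succ_apply]
      exact hvan (j+1) (by omega))
    set c : ℕ → ℚ := fun j => (Nat.card ((Triangle.rotate^[j] T).obj₁⟦(1:ℤ)⟧ ⟶ M) : ℚ) with hc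
    have hcpos : ∀ j, 0 < c j := fun j => by simp only [hc]; exact_mod_cast Nat.card_pos
    have hrw : ∀ k, (Triangle.rotate^[k] T.rotate) = (Triangle.rotate^[k+1] T) := by
      intro k; rw [Function.iterate_succ_apply]
    have IH' : (rho T.rotate M : ℚ) = ∏ j ∈ Finset.range n, (c (j+1)) ^ ((-1:ℤ)^j) := by
      rw [IH]; exact Finset.prod_congr rfl (fun j _ => by rw [hrw])
    have hPpos : (0:ℚ) < ∏ j ∈ Finset.range n, (c (j+1)) ^ ((-1:ℤ)^j) :=
      Finset.prod_pos (fun j _ => zpow_pos (hcpos _) _)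
    have h0 : (Nat.card ((Triangle.rotate^[0] T).obj₁⟦(1:ℤ)⟧ ⟶ M) : ℚ)
        = (rho T.rotate M : ℚ) * (rho T M : ℚ) := by
      simp only [Function.iterate_zero_apply]; exact_mod_cast rho_mul hT M
    rw [Finset.prod_range_succ']
    have hinv : ∏ j ∈ Finset.range n, (c (j+1)) ^ ((-1:ℤ)^(j+1))
        = (∏ j ∈ Finset.range n, (c (j+1)) ^ ((-1:ℤ)^j))⁻¹ := by
      rw [← Finset.prod_inv_distrib]
      refine Finset.prod_congr rfl (fun j _ => ?_)
      rw [pow_succ, zpow_mul, zpow_neg_one]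
    rw [hinv, ← IH', pow_zero, zpow_one, h0,
      inv_mul_cancel_left₀ (by exact_mod_cast (rho_pos T.rotate M).ne')]

lemma sig_prod (M : C) : ∀ (n : ℕ) (T : Triangle C) (_ : T ∈ distTriang C)
    (_ : ∀ j, n ≤ j → Nat.card (M ⟶ (Triangle.invRotate^[j] T).obj₁) = 1),
    (sig T M : ℚ) =
      ∏ j ∈ Finset.range n, (Nat.card (M ⟶ (Triangle.invRotate^[j] T).obj₁) : ℚ) ^ ((-1:ℤ)^j) := by
  intro n
  induction n with
  | zero =>
    intro T hT hvan
    simp only [Finset.range_zero, Finset.prod_empty, Nat.cast_eq_one]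
    exact sig_one_of_card_one (by simpa using hvan 0 le_rfl)
  | succ n ih =>
    intro T hT hvan
    have IH := ih T.invRotate (inv_rot_of_distTriang _ hT) (fun j hj => by
      rw [← Function.iterate_succ_apply]
      exact hvan (j+1) (by omega))
    set c : ℕ → ℚ := fun j => (Nat.card (M ⟶ (Triangle.invRotate^[j] T).obj₁) : ℚ) with hc
    have hcpos : ∀ j, 0 < c j := fun j => by simp only [hc]; exact_mod_cast Nat.card_pos
    have hrw : ∀ k, (Triangle.invRotate^[k] T.invRotate) = (Triangle.invRotate^[k+1] T) := by
      intro k; rw [Function.iterate_succ_apply]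
    have IH' : (sig T.invRotate M : ℚ) = ∏ j ∈ Finset.range n, (c (j+1)) ^ ((-1:ℤ)^j) := by
      rw [IH]; exact Finset.prod_congr rfl (fun j _ => by rw [hrw])
    have hPpos : (0:ℚ) < ∏ j ∈ Finset.range n, (c (j+1)) ^ ((-1:ℤ)^j) :=
      Finset.prod_pos (fun j _ => zpow_pos (hcpos _) _)
    have h0 : (Nat.card (M ⟶ (Triangle.invRotate^[0] T).obj₁) : ℚ)
        = (sig T.invRotate M : ℚ) * (sig T M : ℚ) := by
      simp only [Function.iterate_zero_apply]; exact_mod_cast sig_mul hT M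
    rw [Finset.prod_range_succ']
    have hinv : ∏ j ∈ Finset.range n, (c (j+1)) ^ ((-1:ℤ)^(j+1))
        = (∏ j ∈ Finset.range n, (c (j+1)) ^ ((-1:ℤ)^j))⁻¹ := by
      rw [← Finset.prod_inv_distrib]
      refine Finset.prod_congr rfl (fun j _ => ?_)
      rw [pow_succ, zpow_mul, zpow_neg_one]
    rw [hinv, ← IH', pow_zero, zpow_one, h0,
      inv_mul_cancel_left₀ (by exact_mod_cast (sig_pos T.invRotate M).ne')]

section Shifts

noncomputable def shiftHomEquiv' (z : ℤ) (A B : C) : (A ⟶ B) ≃ (A⟦z⟧ ⟶ B⟦z⟧) :=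
  (Functor.FullyFaithful.ofFullyFaithful (shiftFunctor C z)).homEquiv

lemma card_shift_hom (z : ℤ) (A B : C) :
    Nat.card (A⟦z⟧ ⟶ B⟦z⟧) = Nat.card (A ⟶ B) :=
  (Nat.card_congr (shiftHomEquiv' z A B)).symm

lemma card_hom_congr {A B A' B' : C} (e₁ : A ≅ A') (e₂ : B ≅ B') :
    Nat.card (A ⟶ B) = Nat.card (A' ⟶ B') :=
  Nat.card_congr (e₁.homCongr e₂)

lemma card_hom_to_negshift (A B : C) (a : ℤ) :
    Nat.card (A ⟶ B⟦-a⟧) = Nat.card (A⟦a⟧ ⟶ B) := by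
  rw [← card_shift_hom a A (B⟦-a⟧)]
  exact card_hom_congr (Iso.refl _)
    (((shiftFunctorAdd' C (-a) a 0 (by ring)).symm.app B) ≪≫ (shiftFunctorZero C ℤ).app B)

lemma rot_obj_iso (T : Triangle C) :
    ∀ a : ℕ, Nonempty ((Triangle.rotate^[3*a] T).obj₁ ≅ T.obj₁⟦(a:ℤ)⟧) := by
  intro a
  induction a with
  | zero =>
    simp only [Nat.mul_zero, Function.iterate_zero_apply, Nat.cast_zero]
    exact ⟨((shiftFunctorZero C ℤ).app T.obj₁).symm⟩
  | succ a ih =>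
    obtain ⟨e⟩ := ih
    have h3 : 3*(a+1) = 3 + 3*a := by ring
    rw [h3, Function.iterate_add_apply]
    exact ⟨(shiftFunctor C (1:ℤ)).mapIso e ≪≫
      (shiftFunctorAdd' C (a:ℤ) 1 ((a+1:ℕ):ℤ) (by push_cast; ring)).symm.app T.obj₁⟩

lemma invRot_obj_iso (T : Triangle C) :
    ∀ a : ℕ, Nonempty ((Triangle.invRotate^[3*a] T).obj₁ ≅ T.obj₁⟦-(a:ℤ)⟧) := by
  intro a
  induction a with
  | zero =>
    simp only [Nat.mul_zero, Function.iterate_zero_apply, Nat.cast_zero, neg_zero]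
    exact ⟨((shiftFunctorZero C ℤ).app T.obj₁).symm⟩
  | succ a ih =>
    obtain ⟨e⟩ := ih
    have h3 : 3*(a+1) = 3 + 3*a := by ring
    rw [h3, Function.iterate_add_apply]
    exact ⟨(shiftFunctor C (-1:ℤ)).mapIso e ≪≫
      (shiftFunctorAdd' C (-(a:ℤ)) (-1) (-((a+1:ℕ):ℤ)) (by push_cast; ring)).symm.app T.obj₁⟩

lemma card_rot_hom (T : Triangle C) (M : C) (a : ℕ) :
    Nat.card ((Triangle.rotate^[3*a] T).obj₁⟦(1:ℤ)⟧ ⟶ M)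
      = Nat.card (T.obj₁⟦(a:ℤ)+1⟧ ⟶ M) := by
  obtain ⟨e⟩ := rot_obj_iso T a
  exact card_hom_congr ((shiftFunctor C (1:ℤ)).mapIso e ≪≫
    (shiftFunctorAdd' C (a:ℤ) 1 ((a:ℤ)+1) rfl).symm.app T.obj₁) (Iso.refl M)

lemma card_invRot_hom (T : Triangle C) (M : C) (a : ℕ) :
    Nat.card (M ⟶ (Triangle.invRotate^[3*a] T).obj₁)
      = Nat.card (M⟦(a:ℤ)⟧ ⟶ T.obj₁) := by
  obtain ⟨e⟩ := invRot_obj_iso T a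
  rw [card_hom_congr (Iso.refl M) e]
  exact card_hom_to_negshift M T.obj₁ a

end Shifts

end Cat

section Cat2
variable {C : Type u} [Category.{v} C] [Preadditive C] [HasZeroObject C] [HasShift C ℤ]
  [∀ i : ℤ, (CategoryTheory.shiftFunctor C i).Additive] [Pretriangulated C]
  [∀ A B : C, Finite (A ⟶ B)]

/-- The subgroup `{δ : Z ⟶ Z | b ≫ δ = 0 ∧ δ ≫ c = 0}`. -/
def coneStab {B Z W : C} (b : B ⟶ Z) (c : Z ⟶ W) : AddSubgroup (Z ⟶ Z) where
  carrier := {δ | b ≫ δ = 0 ∧ δ ≫ c = 0}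
  zero_mem' := by simp
  add_mem' := by
    rintro δ₁ δ₂ ⟨h1, h2⟩ ⟨h3, h4⟩
    constructor
    · rw [Preadditive.comp_add, h1, h3, add_zero]
    · rw [Preadditive.add_comp, h2, h4, add_zero]
  neg_mem' := by
    rintro δ ⟨h1, h2⟩
    constructor
    · rw [Preadditive.comp_neg, h1, neg_zero]
    · rw [Preadditive.neg_comp, h2, neg_zero]

lemma mem_coneStab {B Z W : C} (b : B ⟶ Z) (c : Z ⟶ W) (δ : Z ⟶ Z) :
    δ ∈ coneStab b c ↔ b ≫ δ = 0 ∧ δ ≫ c = 0 := Iff.rfl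


variable {X L Y : C}

lemma per_triangle {u : X ⟶ L} {v : L ⟶ Y} {w : Y ⟶ X⟦(1:ℤ)⟧}
    (hT : Triangle.mk u v w ∈ distTriang C) :
    Nat.card (coneStab v w) * rho (Triangle.mk u v w).rotate Y =
      Nat.card (coneStab w (u⟦(1:ℤ)⟧')) *
        sig ((Triangle.mk u v w).rotate.rotate).invRotate (X⟦(1:ℤ)⟧) := by
  set Δ := Triangle.mk u v w with hΔ
  have hrot2 : Δ.rotate.rotate ∈ distTriang C := rot_of_distTriang _ (rot_of_distTriang _ hT)
  -- the two additive maps on Hom(X⟦1⟧, Y)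
  set Φ : (X⟦(1:ℤ)⟧ ⟶ Y) →+ (Y ⟶ Y) := tmap Δ Y with hΦ
  set p : (X⟦(1:ℤ)⟧ ⟶ Y) →+ (X⟦(1:ℤ)⟧ ⟶ X⟦(1:ℤ)⟧) := smap Δ.rotate.rotate (X⟦(1:ℤ)⟧) with hp
  have hΦ_apply : ∀ ε : (X⟦(1:ℤ)⟧ ⟶ Y), Φ ε = w ≫ ε := fun ε => rfl
  have hp_apply : ∀ ε : (X⟦(1:ℤ)⟧ ⟶ Y), p ε = ε ≫ w := fun ε => rfl
  -- the intermediate subgroup K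
  set K : AddSubgroup (X⟦(1:ℤ)⟧ ⟶ Y) :=
    { carrier := {ε | w ≫ ε ≫ w = 0}
      zero_mem' := by simp
      add_mem' := by
        intro ε₁ ε₂ h1 h2
        show w ≫ (ε₁ + ε₂) ≫ w = 0
        rw [Preadditive.add_comp, Preadditive.comp_add, h1, h2, add_zero]
      neg_mem' := by
        intro ε h
        show w ≫ (-ε) ≫ w = 0
        rw [Preadditive.neg_comp, Preadditive.comp_neg, h, neg_zero] } with hK
  have hKmem : ∀ ε : (X⟦(1:ℤ)⟧ ⟶ Y), ε ∈ K ↔ w ≫ ε ≫ w = 0 := fun ε => Iff.rfl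
  have hker1 : Φ.ker ≤ K := by
    intro ε hε
    rw [AddMonoidHom.mem_ker, hΦ_apply] at hε
    rw [hKmem, ← Category.assoc, hε, Limits.zero_comp]
  have hker2 : p.ker ≤ K := by
    intro ε hε
    rw [AddMonoidHom.mem_ker, hp_apply] at hε
    rw [hKmem, hε, Limits.comp_zero]
  have hmap1 : K.map Φ = coneStab v w := by
    ext δ
    constructor
    · rintro ⟨ε, hε, rfl⟩
      rw [hΦ_apply]
      constructor
      · rw [← Category.assoc]
        have : v ≫ w = 0 := comp_distTriang_mor_zero₂₃ _ hT
        rw [this, Limits.zero_comp]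
      · rw [Category.assoc]
        exact hε
    · rintro ⟨h1, h2⟩
      obtain ⟨g, hg⟩ := Triangle.yoneda_exact₃ _ hT δ h1
      have hg' : δ = w ≫ g := hg
      refine ⟨g, ?_, hg'.symm⟩
      show w ≫ g ≫ w = 0
      exact ((Category.assoc _ _ _).symm.trans (congrArg (· ≫ w) hg'.symm)).trans h2
  have hmap2 : K.map p = coneStab w (u⟦(1:ℤ)⟧') := by
    ext α
    constructor
    · rintro ⟨ε, hε, rfl⟩
      rw [hp_apply]
      constructor
      · exact hε
      · rw [Category.assoc]
        have : w ≫ u⟦(1:ℤ)⟧' = 0 := comp_distTriang_mor_zero₃₁ _ hT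
        rw [this, Limits.comp_zero]
    · rintro ⟨h1, h2⟩
      obtain ⟨g, hg⟩ := Triangle.coyoneda_exact₁ _ hT α h2
      have hg' : α = g ≫ w := hg
      refine ⟨g, ?_, hg'.symm⟩
      show w ≫ g ≫ w = 0
      rw [← hg']
      exact h1
  have hc1 : Nat.card K = Nat.card Φ.ker * Nat.card (coneStab v w) := by
    rw [← hmap1]; exact card_subgroup_eq_ker_mul_map Φ K hker1
  have hc2 : Nat.card K = Nat.card p.ker * Nat.card (coneStab w (u⟦(1:ℤ)⟧')) := by
    rw [← hmap2]; exact card_subgroup_eq_ker_mul_map p K hker2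
  have hk1 : Nat.card Φ.ker = rho Δ.rotate Y := by
    exact congrArg (fun (S : AddSubgroup (X⟦(1:ℤ)⟧ ⟶ Y)) => Nat.card S) (tmap_ker_eq hT Y)
  have hk2 : Nat.card p.ker = sig (Δ.rotate.rotate).invRotate (X⟦(1:ℤ)⟧) := by
    exact congrArg (fun (S : AddSubgroup (X⟦(1:ℤ)⟧ ⟶ Y)) => Nat.card S) (smap_ker_eq hrot2 (X⟦(1:ℤ)⟧))
  rw [← hk1, ← hk2, mul_comm (Nat.card (coneStab v w)), mul_comm _ (Nat.card p.ker), ← hc1, ← hc2]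

def TriSet (A B Z : C) : Type _ :=
  {t : (A ⟶ B) × (B ⟶ Z) × (Z ⟶ A⟦(1:ℤ)⟧) // Triangle.mk t.1 t.2.1 t.2.2 ∈ distTriang C}

instance (A B Z : C) : Finite (TriSet A B Z) := by unfold TriSet; infer_instance

def TriCompl {A B : C} (u : A ⟶ B) (Z : C) : Type _ :=
  {vw : (B ⟶ Z) × (Z ⟶ A⟦(1:ℤ)⟧) // Triangle.mk u vw.1 vw.2 ∈ distTriang C}

instance {A B : C} (u : A ⟶ B) (Z : C) : Finite (TriCompl u Z) := by unfold TriCompl; infer_instance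


instance autFinite (Z : C) : Finite (Aut Z) :=
  Finite.of_injective (fun φ : Aut Z => (φ.hom : Z ⟶ Z)) (fun _ _ h => Iso.ext h)

lemma compl_nonempty_iff {A B : C} (u : A ⟶ B) (Z : C) :
    Nonempty (TriCompl u Z) ↔ ConeIs u Z := by
  constructor
  · rintro ⟨⟨⟨v, w⟩, h⟩⟩; exact ⟨v, w, h⟩
  · rintro ⟨v, w, h⟩; exact ⟨⟨⟨v, w⟩, h⟩⟩

/-- orbit–stabilizer: the completions of `u`, weighted by their stabilizer subgroups,
count `Aut Z`. -/
lemma sum_compl {A B : C} (u : A ⟶ B) (Z : C) (c₀ : TriCompl u Z) :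
    ∑ c : TriCompl u Z, Nat.card (coneStab c.1.1 c.1.2) = Nat.card (Aut Z) := by
  classical
  obtain ⟨⟨v₀, w₀⟩, h₀⟩ := c₀
  -- the action map
  have mkdist : ∀ φ : Aut Z, Triangle.mk u (v₀ ≫ φ.hom) (φ.inv ≫ w₀) ∈ distTriang C := by
    intro φ
    refine isomorphic_distinguished _ h₀ _ ?_
    exact Triangle.isoMk _ _ (Iso.refl _) (Iso.refl _) φ.symm ((Category.comp_id _).trans (Category.id_comp _).symm)
      ((Category.assoc _ _ _).trans ((congrArg (v₀ ≫ ·) φ.hom_inv_id).trans ((Category.comp_id _).trans (Category.id_comp _).symm)))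
      ((congrArg ((φ.inv ≫ w₀) ≫ ·) ((shiftFunctor C (1:ℤ)).map_id _)).trans (Category.comp_id _))
  set θ : Aut Z → TriCompl u Z := fun φ => ⟨(v₀ ≫ φ.hom, φ.inv ≫ w₀), mkdist φ⟩ with hθ
  have hsurj : ∀ c : TriCompl u Z, ∃ φ, θ φ = c := by
    rintro ⟨⟨v, w⟩, h⟩
    obtain ⟨cm, hc1, hc2⟩ : ∃ cm : Z ⟶ Z, v₀ ≫ cm = 𝟙 B ≫ v ∧
        w₀ ≫ (shiftFunctor C (1:ℤ)).map (𝟙 A) = cm ≫ w :=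
      complete_distinguished_triangle_morphism _ _ h₀ h (𝟙 A) (𝟙 B)
      ((Category.comp_id _).trans (Category.id_comp _).symm)
    have hc1' : v₀ ≫ cm = v := by simpa using hc1
    have hc2' : w₀ = cm ≫ w := by simpa using hc2
    have : IsIso cm := isIso₃_of_isIso₁₂
      (T := Triangle.mk u v₀ w₀) (T' := Triangle.mk u v w)
      ⟨𝟙 A, 𝟙 B, cm, (Category.comp_id _).trans (Category.id_comp _).symm, hc1, hc2⟩ h₀ h
      (IsIso.id _) (IsIso.id _)
    refine ⟨asIso cm, ?_⟩
    apply Subtype.ext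
    dsimp [θ]
    refine Prod.ext ?_ ?_
    · simpa using hc1'
    · show (asIso cm).inv ≫ w₀ = w
      rw [hc2', ← Category.assoc]
      simp
  -- each fiber is in bijection with the stabilizer subgroup
  have hfib : ∀ c : TriCompl u Z,
      Nat.card {φ : Aut Z // θ φ = c} = Nat.card (coneStab c.1.1 c.1.2) := by
    rintro c
    obtain ⟨φ₀, hφ₀⟩ := hsurj c
    obtain ⟨⟨v, w⟩, h⟩ := c
    have hv₀ : v₀ ≫ φ₀.hom = v := congrArg (fun x => x.1.1) hφ₀
    have hw₀ : φ₀.inv ≫ w₀ = w := congrArg (fun x => x.1.2) hφ₀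
    have sqzero : ∀ δ : Z ⟶ Z, δ ∈ coneStab v w → δ ≫ δ = 0 := by
      rintro δ ⟨h1, h2⟩
      obtain ⟨ε, hε⟩ := Triangle.yoneda_exact₃ _ h δ h1
      have hε' : δ = w ≫ ε := hε
      exact ((congrArg (δ ≫ ·) hε').trans (Category.assoc _ _ _).symm).trans ((congrArg (· ≫ ε) h2).trans Limits.zero_comp)
    refine Nat.card_congr
      ⟨fun x => ⟨φ₀.inv ≫ x.1.hom - 𝟙 Z, ?_, ?_⟩,
       fun y => ⟨φ₀ ≪≫ ⟨𝟙 Z + y.1, 𝟙 Z - y.1, ?_, ?_⟩, ?_⟩, ?_, ?_⟩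
    · -- v ≫ δ = 0
      obtain ⟨φx, hx⟩ := x
      have hv : v₀ ≫ φx.hom = v := congrArg (fun z => z.1.1) hx
      have hvi : v ≫ φ₀.inv = v₀ := by
        exact (congrArg (· ≫ φ₀.inv) hv₀.symm).trans ((Category.assoc _ _ _).trans ((congrArg (v₀ ≫ ·) φ₀.hom_inv_id).trans (Category.comp_id _)))
      show v ≫ (φ₀.inv ≫ φx.hom - 𝟙 Z) = 0
      rw [Preadditive.comp_sub, ← Category.assoc, hvi, hv, Category.comp_id, sub_self]
    · -- δ ≫ w = 0
      obtain ⟨φx, hx⟩ := x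
      have hww : φx.inv ≫ w₀ = w := congrArg (fun z => z.1.2) hx
      have hw' : φx.hom ≫ w = w₀ := by
        exact (congrArg (φx.hom ≫ ·) hww.symm).trans ((Category.assoc _ _ _).symm.trans ((congrArg (· ≫ w₀) φx.hom_inv_id).trans (Category.id_comp _)))
      show (φ₀.inv ≫ φx.hom - 𝟙 Z) ≫ w = 0
      rw [Preadditive.sub_comp, Category.assoc, hw', hw₀, Category.id_comp, sub_self]
    · -- hom_inv_id
      have hsq := sqzero y.1 y.2
      simp only [Preadditive.comp_sub, Preadditive.add_comp, Category.comp_id,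
        Category.id_comp, Preadditive.comp_add]
      rw [hsq]
      abel
    · -- inv_hom_id
      have hsq := sqzero y.1 y.2
      simp only [Preadditive.comp_sub, Preadditive.add_comp, Category.comp_id,
        Category.id_comp, Preadditive.comp_add, Preadditive.sub_comp]
      rw [hsq]
      abel
    · -- lands in the fiber
      apply Subtype.ext
      refine Prod.ext ?_ ?_
      · show v₀ ≫ (φ₀.hom ≫ (𝟙 Z + y.1)) = v
        rw [← Category.assoc, hv₀, Preadditive.comp_add, Category.comp_id, y.2.1, add_zero]
      · show ((𝟙 Z - y.1) ≫ φ₀.inv) ≫ w₀ = w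
        rw [Category.assoc, hw₀, Preadditive.sub_comp, Category.id_comp, y.2.2, sub_zero]
    · -- left inverse
      rintro x
      apply Subtype.ext
      apply Iso.ext
      show φ₀.hom ≫ (𝟙 Z + (φ₀.inv ≫ x.1.hom - 𝟙 Z)) = x.1.hom
      simp [φ₀.hom_inv_id_assoc]
    · -- right inverse
      rintro y
      apply Subtype.ext
      show φ₀.inv ≫ (φ₀.hom ≫ (𝟙 Z + y.1)) - 𝟙 Z = y.1
      simp [φ₀.inv_hom_id, φ₀.inv_hom_id_assoc]
  calc ∑ c : TriCompl u Z, Nat.card (coneStab c.1.1 c.1.2)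
      = ∑ c : TriCompl u Z, Fintype.card {φ : Aut Z // θ φ = c} :=
        Finset.sum_congr rfl (fun c _ => by rw [← hfib c, Nat.card_eq_fintype_card])
    _ = Fintype.card (Aut Z) := by
        rw [Fintype.card_eq_sum_ones, ← Fintype.sum_fiberwise θ (fun _ => (1:ℕ))]
        exact Finset.sum_congr rfl (fun c _ => Fintype.card_eq_sum_ones)
    _ = Nat.card (Aut Z) := Nat.card_eq_fintype_card.symm

/-- reindexing the sum over distinguished triangles by the first morphism -/
lemma triSet_sum_eq (A B Z : C) (F : ∀ {u : A ⟶ B}, TriCompl u Z → ℕ)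
    (hconst : ∀ (u : A ⟶ B) (c₀ : TriCompl u Z), ∑ c : TriCompl u Z, F c = Nat.card (Aut Z)) :
    ∑ t : TriSet A B Z, F (u := t.1.1) ⟨(t.1.2.1, t.1.2.2), t.2⟩
      = Nat.card {f : A ⟶ B // ConeIs f Z} * Nat.card (Aut Z) := by
  classical
  let e : (Σ u : A ⟶ B, TriCompl u Z) ≃ TriSet A B Z :=
    { toFun := fun s => ⟨⟨s.1, s.2.1.1, s.2.1.2⟩, s.2.2⟩
      invFun := fun t => ⟨t.1.1, ⟨(t.1.2.1, t.1.2.2), t.2⟩⟩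
      left_inv := by rintro ⟨u, ⟨⟨v, w⟩, h⟩⟩; rfl
      right_inv := by rintro ⟨⟨u, v, w⟩, h⟩; rfl }
  rw [← Equiv.sum_comp e (fun t : TriSet A B Z => F (u := t.1.1) ⟨(t.1.2.1, t.1.2.2), t.2⟩)]
  have : ∀ s : (Σ u : A ⟶ B, TriCompl u Z),
      F (u := (e s).1.1) ⟨((e s).1.2.1, (e s).1.2.2), (e s).2⟩ = F s.2 := by
    rintro ⟨u, ⟨⟨v, w⟩, h⟩⟩; rfl
  rw [Finset.sum_congr rfl (fun s _ => this s)]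
  rw [← Finset.univ_sigma_univ, Finset.sum_sigma]
  have : ∀ u : A ⟶ B, ∑ c : TriCompl u Z, F c
      = if ConeIs u Z then Nat.card (Aut Z) else 0 := by
    intro u
    by_cases hne : Nonempty (TriCompl u Z)
    · have hP : ConeIs u Z := by
        obtain ⟨⟨⟨v, w⟩, h⟩⟩ := hne; exact ⟨v, w, h⟩
      rw [if_pos hP]
      exact hconst u hne.some
    · have hP : ¬ ConeIs u Z := by
        rintro ⟨v, w, h⟩; exact hne ⟨⟨⟨v, w⟩, h⟩⟩
      rw [if_neg hP]
      have : IsEmpty (TriCompl u Z) := not_nonempty_iff.1 hne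
      simp
  rw [Finset.sum_congr rfl (fun u _ => this u)]
  rw [Finset.sum_ite, Finset.sum_const_zero, add_zero, Finset.sum_const, smul_eq_mul]
  have h1 : Nat.card {f : A ⟶ B // ConeIs f Z}
      = (Finset.filter (fun x : A ⟶ B => ConeIs x Z) Finset.univ).card := by
    rw [Nat.card_eq_fintype_card, Fintype.card_subtype]
  rw [h1]

/-- rotation gives a bijection of triangle sets -/
def rotEquiv (X L Y : C) : TriSet X L Y ≃ TriSet L Y (X⟦(1:ℤ)⟧) where
  toFun t := ⟨(t.1.2.1, t.1.2.2, -(t.1.1)⟦(1:ℤ)⟧'), rot_of_distTriang _ t.2⟩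
  invFun t := ⟨((shiftFunctor C (1:ℤ)).preimage (-t.1.2.2), t.1.1, t.1.2.1), by
    obtain ⟨⟨v, w, s⟩, h⟩ := t
    have hs : -((shiftFunctor C (1:ℤ)).map ((shiftFunctor C (1:ℤ)).preimage (-s))) = s := by
      rw [Functor.map_preimage]; simp
    apply (rotate_distinguished_triangle _).2
    show Triangle.mk v w (-((shiftFunctor C (1:ℤ)).preimage (-s))⟦(1:ℤ)⟧') ∈ distTriang C
    rw [show (-((shiftFunctor C (1:ℤ)).preimage (-s))⟦(1:ℤ)⟧') = s from hs]
    exact h⟩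
  left_inv := by
    rintro ⟨⟨u, v, w⟩, h⟩
    apply Subtype.ext
    show ((shiftFunctor C (1:ℤ)).preimage (-(-(u)⟦(1:ℤ)⟧')), v, w) = (u, v, w)
    rw [neg_neg]
    congr 1
    apply (shiftFunctor C (1:ℤ)).map_injective
    rw [Functor.map_preimage]
  right_inv := by
    rintro ⟨⟨v, w, s⟩, h⟩
    apply Subtype.ext
    show (v, w, -((shiftFunctor C (1:ℤ)).preimage (-s))⟦(1:ℤ)⟧') = (v, w, s)
    rw [Functor.map_preimage, neg_neg]

lemma card_aut_shift (X : C) : Nat.card (Aut (X⟦(1:ℤ)⟧)) = Nat.card (Aut X) := by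
  refine (Nat.card_congr ⟨fun φ => (shiftFunctor C (1:ℤ)).mapIso φ,
    fun ψ => (shiftFunctor C (1:ℤ)).preimageIso ψ, fun φ => ?_, fun ψ => ?_⟩).symm
  · apply Iso.ext
    show (shiftFunctor C (1:ℤ)).preimage ((shiftFunctor C (1:ℤ)).map φ.hom) = φ.hom
    apply (shiftFunctor C (1:ℤ)).map_injective
    rw [Functor.map_preimage]
  · apply Iso.ext
    show (shiftFunctor C (1:ℤ)).map ((shiftFunctor C (1:ℤ)).preimage ψ.hom) = ψ.hom
    rw [Functor.map_preimage]

lemma card_hom_one_of_zero {A B : C} (h : ∀ f : A ⟶ B, f = 0) : Nat.card (A ⟶ B) = 1 :=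
  Nat.card_eq_one_iff_unique.2 ⟨⟨fun f g => by rw [h f, h g]⟩, ⟨0⟩⟩


end Cat2

lemma prod_range_triple (f : ℕ → ℚ) (n : ℕ) :
    ∏ j ∈ Finset.range (3*n), f j = ∏ i ∈ Finset.range n, (f (3*i) * f (3*i+1) * f (3*i+2)) := by
  induction n with
  | zero => simp
  | succ n ih =>
    rw [show 3*(n+1) = (3*n+1+1)+1 by ring, Finset.prod_range_succ, Finset.prod_range_succ,
      Finset.prod_range_succ, ih, Finset.prod_range_succ]
    ring

lemma hap_eq_prod (g : ℕ → ℕ) (N : ℕ) (h1 : ∀ i, N ≤ i → g i = 1) :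
    (∏' i : ℕ, ((g i : ℚ) ^ ((-1 : ℤ) ^ (i + 1))))
      = ∏ i ∈ Finset.range N, ((g i : ℚ) ^ ((-1 : ℤ) ^ (i + 1))) := by
  refine tprod_eq_prod (fun i hi => ?_)
  rw [h1 i (by simpa using hi)]
  simp

section Key
variable {C : Type u} [Category.{v} C] [Preadditive C] [HasZeroObject C] [HasShift C ℤ]
  [∀ i : ℤ, (CategoryTheory.shiftFunctor C i).Additive] [Pretriangulated C]
  [∀ A B : C, Finite (A ⟶ B)]

lemma sign30 (i : ℕ) : ((-1:ℤ))^(3*i) = (-1:ℤ)^i := by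
  rw [pow_mul]; norm_num
lemma sign31 (i : ℕ) : ((-1:ℤ))^(3*i+1) = -((-1:ℤ)^i) := by
  rw [pow_succ, sign30]; ring
lemma sign32 (i : ℕ) : ((-1:ℤ))^(3*i+2) = (-1:ℤ)^i := by
  rw [show 3*i+2 = (3*i+1)+1 by ring, pow_succ, sign31]; ring

lemma coneStab_neg {B Z W : C} (b : B ⟶ Z) (c : Z ⟶ W) :
    coneStab b (-c) = coneStab b c := by
  ext δ
  show (b ≫ δ = 0 ∧ δ ≫ (-c) = 0) ↔ (b ≫ δ = 0 ∧ δ ≫ c = 0)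
  rw [Preadditive.comp_neg, neg_eq_zero]

variable {X L Y : C}

lemma Hval0 (u : X ⟶ L) (v : L ⟶ Y) (w : Y ⟶ X⟦(1:ℤ)⟧) (a : ℕ) :
    Nat.card ((Triangle.rotate^[3*a] (Triangle.mk u v w).rotate).obj₁⟦(1:ℤ)⟧ ⟶ Y)
      = Nat.card (L⟦(a:ℤ)+1⟧ ⟶ Y) :=
  card_rot_hom (Triangle.mk u v w).rotate Y a

lemma Hval1 (u : X ⟶ L) (v : L ⟶ Y) (w : Y ⟶ X⟦(1:ℤ)⟧) (a : ℕ) :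
    Nat.card ((Triangle.rotate^[3*a+1] (Triangle.mk u v w).rotate).obj₁⟦(1:ℤ)⟧ ⟶ Y)
      = Nat.card (Y⟦(a:ℤ)+1⟧ ⟶ Y) := by
  rw [Function.iterate_succ_apply]
  exact card_rot_hom (Triangle.mk u v w).rotate.rotate Y a

lemma Hval2 (u : X ⟶ L) (v : L ⟶ Y) (w : Y ⟶ X⟦(1:ℤ)⟧) (a : ℕ) :
    Nat.card ((Triangle.rotate^[3*a+2] (Triangle.mk u v w).rotate).obj₁⟦(1:ℤ)⟧ ⟶ Y)
      = Nat.card (X⟦((a+1:ℕ):ℤ)+1⟧ ⟶ Y) := by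
  rw [show 3*a+2 = (3*a+1)+1 by ring, Function.iterate_succ_apply,
    Function.iterate_succ_apply, card_rot_hom (Triangle.mk u v w).rotate.rotate.rotate Y a]
  exact card_hom_congr
    ((shiftFunctorAdd' C 1 ((a:ℤ)+1) (((a+1:ℕ):ℤ)+1) (by push_cast; ring)).symm.app X)
    (Iso.refl Y)

lemma Kval0 (u : X ⟶ L) (v : L ⟶ Y) (w : Y ⟶ X⟦(1:ℤ)⟧) (a : ℕ) :
    Nat.card ((X⟦(1:ℤ)⟧) ⟶
        (Triangle.invRotate^[3*a] ((Triangle.mk u v w).rotate.rotate).invRotate).obj₁)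
      = Nat.card (X⟦(a:ℤ)+1⟧ ⟶ L) := by
  rw [card_invRot_hom ((Triangle.mk u v w).rotate.rotate).invRotate (X⟦(1:ℤ)⟧) a]
  exact card_hom_congr ((shiftFunctorAdd' C 1 (a:ℤ) ((a:ℤ)+1) (by ring)).symm.app X)
    (((shiftFunctorAdd' C 1 (-1:ℤ) 0 (by ring)).symm.app L) ≪≫ (shiftFunctorZero C ℤ).app L)

lemma Kval1 (u : X ⟶ L) (v : L ⟶ Y) (w : Y ⟶ X⟦(1:ℤ)⟧) (a : ℕ) :
    Nat.card ((X⟦(1:ℤ)⟧) ⟶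
        (Triangle.invRotate^[3*a+1] ((Triangle.mk u v w).rotate.rotate).invRotate).obj₁)
      = Nat.card (X⟦(a:ℤ)+1⟧ ⟶ X) := by
  rw [Function.iterate_succ_apply,
    card_invRot_hom ((Triangle.mk u v w).rotate.rotate).invRotate.invRotate (X⟦(1:ℤ)⟧) a]
  exact card_hom_congr ((shiftFunctorAdd' C 1 (a:ℤ) ((a:ℤ)+1) (by ring)).symm.app X)
    (((shiftFunctorAdd' C 1 (-1:ℤ) 0 (by ring)).symm.app X) ≪≫ (shiftFunctorZero C ℤ).app X)

lemma Kval2 (u : X ⟶ L) (v : L ⟶ Y) (w : Y ⟶ X⟦(1:ℤ)⟧) (a : ℕ) :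
    Nat.card ((X⟦(1:ℤ)⟧) ⟶
        (Triangle.invRotate^[3*a+2] ((Triangle.mk u v w).rotate.rotate).invRotate).obj₁)
      = Nat.card (X⟦((a+1:ℕ):ℤ)+1⟧ ⟶ Y) := by
  rw [← Function.iterate_succ_apply, Nat.succ_eq_add_one, show 3*a+2+1 = 3*(a+1) by ring,
    card_invRot_hom ((Triangle.mk u v w).rotate.rotate) (X⟦(1:ℤ)⟧) (a+1)]
  exact card_hom_congr
    ((shiftFunctorAdd' C 1 ((a+1:ℕ):ℤ) (((a+1:ℕ):ℤ)+1) (by ring)).symm.app X) (Iso.refl Y)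

lemma key_identity {u : X ⟶ L} {v : L ⟶ Y} {w : Y ⟶ X⟦(1:ℤ)⟧}
    (hT : Triangle.mk u v w ∈ distTriang C) (N : ℕ)
    (vLY : ∀ a, N ≤ a → Nat.card (L⟦(a:ℤ)+1⟧ ⟶ Y) = 1)
    (vYY : ∀ a, N ≤ a → Nat.card (Y⟦(a:ℤ)+1⟧ ⟶ Y) = 1)
    (vXY : ∀ a, N ≤ a → Nat.card (X⟦(a:ℤ)+1⟧ ⟶ Y) = 1)
    (vXL : ∀ a, N ≤ a → Nat.card (X⟦(a:ℤ)+1⟧ ⟶ L) = 1)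
    (vXX : ∀ a, N ≤ a → Nat.card (X⟦(a:ℤ)+1⟧ ⟶ X) = 1) :
    (Nat.card (coneStab v w) : ℚ) * homAlternatingProd Y Y * homAlternatingProd X L
      = (Nat.card (coneStab w (u⟦(1:ℤ)⟧')) : ℚ)
          * homAlternatingProd X X * homAlternatingProd L Y := by
  have hTr : (Triangle.mk u v w).rotate ∈ distTriang C := rot_of_distTriang _ hT
  have hT0 : ((Triangle.mk u v w).rotate.rotate).invRotate ∈ distTriang C :=
    inv_rot_of_distTriang _ (rot_of_distTriang _ hTr)
  -- vanishing for the contravariant chain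
  have hvanH : ∀ j, 3*N ≤ j →
      Nat.card ((Triangle.rotate^[j] (Triangle.mk u v w).rotate).obj₁⟦(1:ℤ)⟧ ⟶ Y) = 1 := by
    intro j hj
    have hdm : j = 3*(j/3) + j%3 := (Nat.div_add_mod j 3).symm
    have ha : N ≤ j/3 := by omega
    have h3 : j%3 = 0 ∨ j%3 = 1 ∨ j%3 = 2 := by omega
    rcases h3 with h|h|h
    · rw [hdm, h, Nat.add_zero, Hval0 u v w (j/3)]; exact vLY _ ha
    · rw [hdm, h, Hval1 u v w (j/3)]; exact vYY _ ha
    · rw [hdm, h, Hval2 u v w (j/3)]; exact vXY _ (by omega)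
  have hvanK : ∀ j, 3*N ≤ j →
      Nat.card ((X⟦(1:ℤ)⟧) ⟶
        (Triangle.invRotate^[j] ((Triangle.mk u v w).rotate.rotate).invRotate).obj₁) = 1 := by
    intro j hj
    have hdm : j = 3*(j/3) + j%3 := (Nat.div_add_mod j 3).symm
    have ha : N ≤ j/3 := by omega
    have h3 : j%3 = 0 ∨ j%3 = 1 ∨ j%3 = 2 := by omega
    rcases h3 with h|h|h
    · rw [hdm, h, Nat.add_zero, Kval0 u v w (j/3)]; exact vXL _ ha
    · rw [hdm, h, Kval1 u v w (j/3)]; exact vXX _ ha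
    · rw [hdm, h, Kval2 u v w (j/3)]; exact vXY _ (by omega)
  -- evaluate rho
  have hrho := rho_prod Y (3*N) (Triangle.mk u v w).rotate hTr hvanH
  rw [prod_range_triple
    (fun j => (Nat.card ((Triangle.rotate^[j] (Triangle.mk u v w).rotate).obj₁⟦(1:ℤ)⟧ ⟶ Y) : ℚ)
      ^ ((-1:ℤ)^j)) N] at hrho
  have hrho2 : (rho (Triangle.mk u v w).rotate Y : ℚ)
      = ∏ i ∈ Finset.range N,
          ((Nat.card (L⟦(i:ℤ)+1⟧ ⟶ Y) : ℚ) ^ ((-1:ℤ)^i)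
            * ((Nat.card (Y⟦(i:ℤ)+1⟧ ⟶ Y) : ℚ) ^ ((-1:ℤ)^i))⁻¹
            * (Nat.card (X⟦((i+1:ℕ):ℤ)+1⟧ ⟶ Y) : ℚ) ^ ((-1:ℤ)^i)) := by
    rw [hrho]
    refine Finset.prod_congr rfl (fun i _ => ?_)
    rw [Hval0 u v w i, Hval1 u v w i, Hval2 u v w i, sign30, sign31, sign32, zpow_neg]
  -- evaluate sig
  have hsig := sig_prod (X⟦(1:ℤ)⟧) (3*N) ((Triangle.mk u v w).rotate.rotate).invRotate hT0 hvanK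
  rw [prod_range_triple
    (fun j => (Nat.card ((X⟦(1:ℤ)⟧) ⟶
      (Triangle.invRotate^[j] ((Triangle.mk u v w).rotate.rotate).invRotate).obj₁) : ℚ)
      ^ ((-1:ℤ)^j)) N] at hsig
  have hsig2 : (sig ((Triangle.mk u v w).rotate.rotate).invRotate (X⟦(1:ℤ)⟧) : ℚ)
      = ∏ i ∈ Finset.range N,
          ((Nat.card (X⟦(i:ℤ)+1⟧ ⟶ L) : ℚ) ^ ((-1:ℤ)^i)
            * ((Nat.card (X⟦(i:ℤ)+1⟧ ⟶ X) : ℚ) ^ ((-1:ℤ)^i))⁻¹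
            * (Nat.card (X⟦((i+1:ℕ):ℤ)+1⟧ ⟶ Y) : ℚ) ^ ((-1:ℤ)^i)) := by
    rw [hsig]
    refine Finset.prod_congr rfl (fun i _ => ?_)
    rw [Kval0 u v w i, Kval1 u v w i, Kval2 u v w i, sign30, sign31, sign32, zpow_neg]
  -- finite product forms of the alternating products
  have hLY : homAlternatingProd L Y
      = ∏ i ∈ Finset.range N, ((Nat.card (L⟦(i:ℤ)+1⟧ ⟶ Y) : ℚ) ^ ((-1:ℤ)^i))⁻¹ := by
    unfold homAlternatingProd
    rw [hap_eq_prod _ N vLY]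
    exact Finset.prod_congr rfl (fun i _ => by rw [pow_succ, zpow_mul, zpow_neg_one])
  have hYY : homAlternatingProd Y Y
      = ∏ i ∈ Finset.range N, ((Nat.card (Y⟦(i:ℤ)+1⟧ ⟶ Y) : ℚ) ^ ((-1:ℤ)^i))⁻¹ := by
    unfold homAlternatingProd
    rw [hap_eq_prod _ N vYY]
    exact Finset.prod_congr rfl (fun i _ => by rw [pow_succ, zpow_mul, zpow_neg_one])
  have hXL : homAlternatingProd X L
      = ∏ i ∈ Finset.range N, ((Nat.card (X⟦(i:ℤ)+1⟧ ⟶ L) : ℚ) ^ ((-1:ℤ)^i))⁻¹ := by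
    unfold homAlternatingProd
    rw [hap_eq_prod _ N vXL]
    exact Finset.prod_congr rfl (fun i _ => by rw [pow_succ, zpow_mul, zpow_neg_one])
  have hXX : homAlternatingProd X X
      = ∏ i ∈ Finset.range N, ((Nat.card (X⟦(i:ℤ)+1⟧ ⟶ X) : ℚ) ^ ((-1:ℤ)^i))⁻¹ := by
    unfold homAlternatingProd
    rw [hap_eq_prod _ N vXX]
    exact Finset.prod_congr rfl (fun i _ => by rw [pow_succ, zpow_mul, zpow_neg_one])
  -- the claim : rho * {L,Y} * {X,X} = sig * {X,L} * {Y,Y}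
  have hclaim : (rho (Triangle.mk u v w).rotate Y : ℚ)
        * homAlternatingProd L Y * homAlternatingProd X X
      = (sig ((Triangle.mk u v w).rotate.rotate).invRotate (X⟦(1:ℤ)⟧) : ℚ)
        * homAlternatingProd X L * homAlternatingProd Y Y := by
    rw [hrho2, hsig2, hLY, hYY, hXL, hXX, ← Finset.prod_mul_distrib,
      ← Finset.prod_mul_distrib, ← Finset.prod_mul_distrib, ← Finset.prod_mul_distrib]
    refine Finset.prod_congr rfl (fun i _ => ?_)
    have p1 : ((Nat.card (L⟦(i:ℤ)+1⟧ ⟶ Y) : ℚ) ^ ((-1:ℤ)^i)) ≠ 0 :=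
      (zpow_pos (by exact_mod_cast Nat.card_pos) _).ne'
    have p2 : ((Nat.card (Y⟦(i:ℤ)+1⟧ ⟶ Y) : ℚ) ^ ((-1:ℤ)^i)) ≠ 0 :=
      (zpow_pos (by exact_mod_cast Nat.card_pos) _).ne'
    have p3 : ((Nat.card (X⟦((i+1:ℕ):ℤ)+1⟧ ⟶ Y) : ℚ) ^ ((-1:ℤ)^i)) ≠ 0 :=
      (zpow_pos (by exact_mod_cast Nat.card_pos) _).ne'
    have p4 : ((Nat.card (X⟦(i:ℤ)+1⟧ ⟶ L) : ℚ) ^ ((-1:ℤ)^i)) ≠ 0 :=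
      (zpow_pos (by exact_mod_cast Nat.card_pos) _).ne'
    have p5 : ((Nat.card (X⟦(i:ℤ)+1⟧ ⟶ X) : ℚ) ^ ((-1:ℤ)^i)) ≠ 0 :=
      (zpow_pos (by exact_mod_cast Nat.card_pos) _).ne'
    field_simp
  -- per-triangle counting identity
  have hptQ : (Nat.card (coneStab v w) : ℚ) * (rho (Triangle.mk u v w).rotate Y : ℚ)
      = (Nat.card (coneStab w (u⟦(1:ℤ)⟧')) : ℚ)
          * (sig ((Triangle.mk u v w).rotate.rotate).invRotate (X⟦(1:ℤ)⟧) : ℚ) := by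
    exact_mod_cast per_triangle hT
  -- positivity
  have hLYpos : 0 < homAlternatingProd L Y := by
    rw [hLY]
    exact Finset.prod_pos (fun i _ => inv_pos.2 (zpow_pos (by exact_mod_cast Nat.card_pos) _))
  have hYYpos : 0 < homAlternatingProd Y Y := by
    rw [hYY]
    exact Finset.prod_pos (fun i _ => inv_pos.2 (zpow_pos (by exact_mod_cast Nat.card_pos) _))
  have hXLpos : 0 < homAlternatingProd X L := by
    rw [hXL]
    exact Finset.prod_pos (fun i _ => inv_pos.2 (zpow_pos (by exact_mod_cast Nat.card_pos) _))
  have hXXpos : 0 < homAlternatingProd X X := by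
    rw [hXX]
    exact Finset.prod_pos (fun i _ => inv_pos.2 (zpow_pos (by exact_mod_cast Nat.card_pos) _))
  have hrpos : (0:ℚ) < (rho (Triangle.mk u v w).rotate Y : ℚ) := by
    exact_mod_cast rho_pos _ _
  have hne : (rho (Triangle.mk u v w).rotate Y : ℚ)
      * homAlternatingProd L Y * homAlternatingProd X X ≠ 0 := by positivity
  apply mul_right_cancel₀ hne
  linear_combination (homAlternatingProd Y Y * homAlternatingProd X L
      * homAlternatingProd L Y * homAlternatingProd X X) * hptQ
    - ((Nat.card (coneStab w (u⟦(1:ℤ)⟧')) : ℚ)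
      * homAlternatingProd X X * homAlternatingProd L Y) * hclaim

end Key
end ToenAux

/-- Toën's formula. -/
theorem stmt7 {k : Type*} [Field k] [Finite k]
    {C : Type u} [CategoryTheory.Category.{v} C] [Preadditive C] [CategoryTheory.Linear k C]
    [HasZeroObject C] [HasBinaryBiproducts C] [HasShift C ℤ]
    [∀ i : ℤ, (CategoryTheory.shiftFunctor C i).Additive] [Pretriangulated C]
    [∀ X Y : C, FiniteDimensional k (X ⟶ Y)]
    (hloc : ∀ X : C, Indecomposable X → IsLocalRing (CategoryTheory.End X))
    (hhfin : ∀ X Y : C, ∃ N : ℕ, ∀ i ≥ N, ∀ f : X⟦(i : ℤ)⟧ ⟶ Y, f = 0)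
    (X Y L : C) :
    (Nat.card {g : L ⟶ Y // ConeIs g (X⟦(1 : ℤ)⟧)} : ℚ) * homAlternatingProd L Y /
        (Nat.card (Aut Y) * homAlternatingProd Y Y) =
      (Nat.card {f : X ⟶ L // ConeIs f Y} : ℚ) * homAlternatingProd X L /
        (Nat.card (Aut X) * homAlternatingProd X X) := by
  classical
  haveI hfin : ∀ A B : C, Finite (A ⟶ B) := fun A B => Module.finite_of_finite k
  -- vanishing bounds
  obtain ⟨N₁, h₁⟩ := hhfin L Y
  obtain ⟨N₂, h₂⟩ := hhfin Y Y
  obtain ⟨N₃, h₃⟩ := hhfin X Y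
  obtain ⟨N₄, h₄⟩ := hhfin X L
  obtain ⟨N₅, h₅⟩ := hhfin X X
  set N : ℕ := N₁ + N₂ + N₃ + N₄ + N₅ with hN
  have vLY : ∀ a, N ≤ a → Nat.card (L⟦(a:ℤ)+1⟧ ⟶ Y) = 1 := fun a ha => by
    rw [show ((a:ℤ)+1) = (((a+1:ℕ)):ℤ) by push_cast; ring]
    exact card_hom_one_of_zero (h₁ (a+1) (by omega))
  have vYY : ∀ a, N ≤ a → Nat.card (Y⟦(a:ℤ)+1⟧ ⟶ Y) = 1 := fun a ha => by
    rw [show ((a:ℤ)+1) = (((a+1:ℕ)):ℤ) by push_cast; ring]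
    exact card_hom_one_of_zero (h₂ (a+1) (by omega))
  have vXY : ∀ a, N ≤ a → Nat.card (X⟦(a:ℤ)+1⟧ ⟶ Y) = 1 := fun a ha => by
    rw [show ((a:ℤ)+1) = (((a+1:ℕ)):ℤ) by push_cast; ring]
    exact card_hom_one_of_zero (h₃ (a+1) (by omega))
  have vXL : ∀ a, N ≤ a → Nat.card (X⟦(a:ℤ)+1⟧ ⟶ L) = 1 := fun a ha => by
    rw [show ((a:ℤ)+1) = (((a+1:ℕ)):ℤ) by push_cast; ring]
    exact card_hom_one_of_zero (h₄ (a+1) (by omega))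
  have vXX : ∀ a, N ≤ a → Nat.card (X⟦(a:ℤ)+1⟧ ⟶ X) = 1 := fun a ha => by
    rw [show ((a:ℤ)+1) = (((a+1:ℕ)):ℤ) by push_cast; ring]
    exact card_hom_one_of_zero (h₅ (a+1) (by omega))
  -- positivity of the alternating products
  have hLYpos : 0 < homAlternatingProd L Y := by
    unfold homAlternatingProd
    rw [hap_eq_prod _ N vLY]
    exact Finset.prod_pos (fun i _ => zpow_pos (by exact_mod_cast Nat.card_pos) _)
  have hYYpos : 0 < homAlternatingProd Y Y := by
    unfold homAlternatingProd
    rw [hap_eq_prod _ N vYY]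
    exact Finset.prod_pos (fun i _ => zpow_pos (by exact_mod_cast Nat.card_pos) _)
  have hXLpos : 0 < homAlternatingProd X L := by
    unfold homAlternatingProd
    rw [hap_eq_prod _ N vXL]
    exact Finset.prod_pos (fun i _ => zpow_pos (by exact_mod_cast Nat.card_pos) _)
  have hXXpos : 0 < homAlternatingProd X X := by
    unfold homAlternatingProd
    rw [hap_eq_prod _ N vXX]
    exact Finset.prod_pos (fun i _ => zpow_pos (by exact_mod_cast Nat.card_pos) _)
  -- the two weighted counts of triangles
  have S1 : ∑ t : TriSet X L Y, Nat.card (coneStab t.1.2.1 t.1.2.2)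
      = Nat.card {f : X ⟶ L // ConeIs f Y} * Nat.card (Aut Y) :=
    triSet_sum_eq X L Y (fun {u} c => Nat.card (coneStab c.1.1 c.1.2))
      (fun u c₀ => sum_compl u Y c₀)
  have S2 : ∑ t : TriSet L Y (X⟦(1:ℤ)⟧), Nat.card (coneStab t.1.2.1 t.1.2.2)
      = Nat.card {g : L ⟶ Y // ConeIs g (X⟦(1:ℤ)⟧)} * Nat.card (Aut (X⟦(1:ℤ)⟧)) :=
    triSet_sum_eq L Y (X⟦(1:ℤ)⟧) (fun {u} c => Nat.card (coneStab c.1.1 c.1.2))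
      (fun u c₀ => sum_compl u (X⟦(1:ℤ)⟧) c₀)
  have S3 : ∑ t : TriSet X L Y, Nat.card (coneStab t.1.2.2 (-(t.1.1)⟦(1:ℤ)⟧'))
      = ∑ t : TriSet L Y (X⟦(1:ℤ)⟧), Nat.card (coneStab t.1.2.1 t.1.2.2) :=
    Equiv.sum_comp (rotEquiv X L Y)
      (fun t => Nat.card (coneStab t.1.2.1 t.1.2.2))
  -- per-triangle identity
  have keyQ : ∀ t : TriSet X L Y,
      (Nat.card (coneStab t.1.2.1 t.1.2.2) : ℚ)
          * homAlternatingProd Y Y * homAlternatingProd X L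
        = (Nat.card (coneStab t.1.2.2 (-(t.1.1)⟦(1:ℤ)⟧')) : ℚ)
          * homAlternatingProd X X * homAlternatingProd L Y := by
    rintro ⟨⟨u', v', w'⟩, h⟩
    show (Nat.card (coneStab v' w') : ℚ) * homAlternatingProd Y Y * homAlternatingProd X L
        = (Nat.card (coneStab w' (-(u')⟦(1:ℤ)⟧')) : ℚ)
          * homAlternatingProd X X * homAlternatingProd L Y
    rw [show -(u')⟦(1:ℤ)⟧' = -((u')⟦(1:ℤ)⟧') from rfl]
    rw [coneStab_neg]
    exact key_identity h N vLY vYY vXY vXL vXX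
  -- sum it up
  have hsum : (∑ t : TriSet X L Y, (Nat.card (coneStab t.1.2.1 t.1.2.2) : ℚ))
        * (homAlternatingProd Y Y * homAlternatingProd X L)
      = (∑ t : TriSet X L Y, (Nat.card (coneStab t.1.2.2 (-(t.1.1)⟦(1:ℤ)⟧')) : ℚ))
        * (homAlternatingProd X X * homAlternatingProd L Y) := by
    rw [Finset.sum_mul, Finset.sum_mul]
    refine Finset.sum_congr rfl (fun t _ => ?_)
    linear_combination keyQ t
  have hcast1 : (∑ t : TriSet X L Y, (Nat.card (coneStab t.1.2.1 t.1.2.2) : ℚ))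
      = ((Nat.card {f : X ⟶ L // ConeIs f Y} * Nat.card (Aut Y) : ℕ) : ℚ) := by
    rw [← S1]; push_cast; rfl
  have hcast2 : (∑ t : TriSet X L Y, (Nat.card (coneStab t.1.2.2 (-(t.1.1)⟦(1:ℤ)⟧')) : ℚ))
      = ((Nat.card {g : L ⟶ Y // ConeIs g (X⟦(1:ℤ)⟧)} * Nat.card (Aut X) : ℕ) : ℚ) := by
    rw [← card_aut_shift X, ← S2, ← S3]; push_cast; rfl
  rw [hcast1, hcast2] at hsum
  push_cast at hsum
  -- final algebra
  have hAutY : (0:ℚ) < (Nat.card (Aut Y) : ℚ) := by exact_mod_cast Nat.card_pos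
  have hAutX : (0:ℚ) < (Nat.card (Aut X) : ℚ) := by exact_mod_cast Nat.card_pos
  rw [div_eq_div_iff (by positivity) (by positivity)]
  linear_combination (-1 : ℚ) * hsum
end

section
/- Assume in addition that C is triangulated (the octahedral axiom holds). Let X, Y, Z, M, L, L' be objects of C and let L' --(f',-m')--> M ⊕ X --(m;f)--> L --theta--> L'[1] be a distinguished triangle, where f' : L' -> M, m' : L' -> X, m : M -> L, f : X -> L. Then the following two conditions are equivalent: (a) Cone(m) is isomorphic to Z[1] and Cone(f) is isomorphic to Y; (b) Cone(m') is isomorphic to Z[1] and Cone(f') is isomorphic to Y. -/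
open CategoryTheory CategoryTheory.Limits CategoryTheory.Pretriangulated
open CategoryTheory.Triangulated

universe v u

section Aux

variable {C : Type u} [CategoryTheory.Category.{v} C] [Preadditive C] [HasZeroObject C]
  [HasShift C ℤ] [∀ i : ℤ, (CategoryTheory.shiftFunctor C i).Additive] [Pretriangulated C]

/-- negation iso on an object -/
@[simps] def negIso (A : C) : A ≅ A where
  hom := -𝟙 A
  inv := -𝟙 A
  hom_inv_id := by simp
  inv_hom_id := by simp

lemma dist_neg₂₃ {A B W : C} (u : A ⟶ B) (v : B ⟶ W) (w : W ⟶ A⟦(1 : ℤ)⟧)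
    (h : Triangle.mk u v w ∈ distTriang C) :
    Triangle.mk u (-v) (-w) ∈ distTriang C :=
  isomorphic_distinguished _ h _
    (Triangle.isoMk _ _ (Iso.refl _) (Iso.refl _) (negIso W)
      (by simp [Triangle.mk]) (by simp [Triangle.mk]) (by simp [Triangle.mk]))

lemma dist_neg₁₃ {A B W : C} (u : A ⟶ B) (v : B ⟶ W) (w : W ⟶ A⟦(1 : ℤ)⟧)
    (h : Triangle.mk u v w ∈ distTriang C) :
    Triangle.mk (-u) v (-w) ∈ distTriang C :=
  isomorphic_distinguished _ h _
    (Triangle.isoMk _ _ (negIso A) (Iso.refl _) (Iso.refl _)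
      (by simp [Triangle.mk]) (by simp [Triangle.mk]) (by simp [Triangle.mk, Functor.map_neg]))

lemma inr_fst_dist (X M : C) [HasBinaryBiproduct X M] [HasBinaryBiproduct M X] :
    Triangle.mk (biprod.inr : X ⟶ M ⊞ X) biprod.fst 0 ∈ distTriang C :=
  isomorphic_distinguished _ (binaryBiproductTriangle_distinguished X M) _
    (Triangle.isoMk _ _ (Iso.refl _) (biprod.braiding M X) (Iso.refl _)
      (by apply biprod.hom_ext <;> simp [Triangle.mk, binaryBiproductTriangle]) (by simp [Triangle.mk, binaryBiproductTriangle]) (by simp [Triangle.mk, binaryBiproductTriangle]))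

end Aux

/-- for a distinguished triangle
`L' --(f',-m')--> M ⊞ X --(m;f)--> L --θ--> L'[1]` in a triangulated category,
the cone conditions on `(m, f)` and on `(m', f')` are equivalent. -/
theorem stmt8 {k : Type*} [Field k] [Finite k]
    {C : Type u} [CategoryTheory.Category.{v} C] [Preadditive C] [CategoryTheory.Linear k C]
    [HasZeroObject C] [HasBinaryBiproducts C] [HasShift C ℤ]
    [∀ i : ℤ, (CategoryTheory.shiftFunctor C i).Additive] [Pretriangulated C]
    [IsTriangulated C]
    [∀ X Y : C, FiniteDimensional k (X ⟶ Y)]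
    (hloc : ∀ X : C, Indecomposable X → IsLocalRing (CategoryTheory.End X))
    {X Y Z M L L' : C}
    (f' : L' ⟶ M) (m' : L' ⟶ X) (m : M ⟶ L) (f : X ⟶ L) (θ : L ⟶ L'⟦(1 : ℤ)⟧)
    (hT : Triangle.mk (biprod.lift f' (-m')) (biprod.desc m f) θ ∈ distTriang C) :
    (ConeIs m (Z⟦(1 : ℤ)⟧) ∧ ConeIs f Y) ↔ (ConeIs m' (Z⟦(1 : ℤ)⟧) ∧ ConeIs f' Y) := by
  have hrot : Triangle.mk (biprod.desc m f) θ (-(biprod.lift f' (-m'))⟦(1 : ℤ)⟧') ∈ distTriang C :=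
    rot_of_distTriang _ hT
  constructor
  · rintro ⟨⟨a, b, hm⟩, ⟨c, d, hf⟩⟩
    constructor
    · -- Cone(m') ≅ Z[1] via octahedron on inl ≫ desc = m
      have comm : (biprod.inl : M ⟶ M ⊞ X) ≫ biprod.desc m f = m := by simp
      have O := someOctahedron comm (binaryBiproductTriangle_distinguished M X) hrot hm
      have hmem := O.mem
      have e : (-(biprod.lift f' (-m'))⟦(1 : ℤ)⟧') ≫ (biprod.snd : M ⊞ X ⟶ X)⟦(1 : ℤ)⟧'
          = m'⟦(1 : ℤ)⟧' := by
        rw [Preadditive.neg_comp, ← Functor.map_comp, biprod.lift_snd, Functor.map_neg, neg_neg]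
      rw [e] at hmem
      refine ⟨O.m₁, -O.m₃, ?_⟩
      rw [rotate_distinguished_triangle]
      exact dist_neg₂₃ _ _ _ hmem
    · -- Cone(f') ≅ Y via octahedron on inr ≫ desc = f
      have comm : (biprod.inr : X ⟶ M ⊞ X) ≫ biprod.desc m f = f := by simp
      have O := someOctahedron comm (inr_fst_dist X M) hrot hf
      have hmem := O.mem
      have e : (-(biprod.lift f' (-m'))⟦(1 : ℤ)⟧') ≫ (biprod.fst : M ⊞ X ⟶ M)⟦(1 : ℤ)⟧'
          = -f'⟦(1 : ℤ)⟧' := by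
        rw [Preadditive.neg_comp, ← Functor.map_comp, biprod.lift_fst]
      rw [e] at hmem
      refine ⟨O.m₁, O.m₃, ?_⟩
      rw [rotate_distinguished_triangle]
      exact hmem
  · rintro ⟨⟨a, b, hm'⟩, ⟨c, d, hf'⟩⟩
    constructor
    · -- Cone(m) ≅ Z[1] via octahedron on lift ≫ snd = -m'
      have hm'' : Triangle.mk (-m') a (-b) ∈ distTriang C := dist_neg₁₃ _ _ _ hm'
      have comm : biprod.lift f' (-m') ≫ (biprod.snd : M ⊞ X ⟶ X) = -m' := by simp
      have h23 : Triangle.mk (biprod.snd : M ⊞ X ⟶ X) 0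
          (-(biprod.inl : M ⟶ M ⊞ X)⟦(1 : ℤ)⟧') ∈ distTriang C :=
        rot_of_distTriang _ (binaryBiproductTriangle_distinguished M X)
      have O := someOctahedron comm hT h23 hm''
      have hmem := O.mem
      have e : (-(biprod.inl : M ⟶ M ⊞ X)⟦(1 : ℤ)⟧') ≫ (biprod.desc m f)⟦(1 : ℤ)⟧'
          = -m⟦(1 : ℤ)⟧' := by
        rw [Preadditive.neg_comp, ← Functor.map_comp, biprod.inl_desc]
      rw [e] at hmem
      refine ⟨O.m₁, O.m₃, ?_⟩
      rw [rotate_distinguished_triangle]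
      exact hmem
    · -- Cone(f) ≅ Y via octahedron on lift ≫ fst = f'
      have comm : biprod.lift f' (-m') ≫ (biprod.fst : M ⊞ X ⟶ M) = f' := by simp
      have h23 : Triangle.mk (biprod.fst : M ⊞ X ⟶ M) 0
          (-(biprod.inr : X ⟶ M ⊞ X)⟦(1 : ℤ)⟧') ∈ distTriang C :=
        rot_of_distTriang _ (inr_fst_dist X M)
      have O := someOctahedron comm hT h23 hf'
      have hmem := O.mem
      have e : (-(biprod.inr : X ⟶ M ⊞ X)⟦(1 : ℤ)⟧') ≫ (biprod.desc m f)⟦(1 : ℤ)⟧'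
          = -f⟦(1 : ℤ)⟧' := by
        rw [Preadditive.neg_comp, ← Functor.map_comp, biprod.inr_desc]
      rw [e] at hmem
      refine ⟨O.m₁, O.m₃, ?_⟩
      rw [rotate_distinguished_triangle]
      exact hmem
end
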